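/- arXiv:0901.2668 — 3 statements merged into one kernel-verified Lean document; each statement's English description precedes it below -/
import Mathlib

section
/- Let x̄ be a local minimizer of the nonlinear program (NLP): x̄ is feasible and f(x̄) ≤ f(x) for all feasible x in some neighborhood of x̄. If the Mangasarian–Fromovitz constraint qualification holds at x̄, then there exists a multiplier vector for x̄: a pair (λ̄, μ̄) ∈ ℝ^s × ℝ^t with μ̄ ≥ 0 componentwise, μ̄_j = 0 for every j with q_j(x̄) < 0, and ∇f(x̄) + Σ_{i=1}^s λ̄_i ∇p_i(x̄) + Σ_{j=1}^t μ̄_j ∇q_j(x̄) = 0. -/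
open scoped RealInnerProductSpace

lemma hasDerivAt_posPartSq (t : ℝ) : HasDerivAt (fun u : ℝ => (max u 0)^2) (2 * max t 0) t := by
  rcases lt_trichotomy t 0 with ht | ht | ht
  · have : (fun u : ℝ => (max u 0)^2) =ᶠ[nhds t] fun _ => (0:ℝ) := by
      filter_upwards [eventually_lt_nhds ht] with u hu
      simp [max_eq_right hu.le]
    rw [max_eq_right ht.le, mul_zero]
    exact (hasDerivAt_const t 0).congr_of_eventuallyEq this
  · subst ht
    rw [hasDerivAt_iff_isLittleO]
    simp only [max_self, mul_zero, zero_smul, sub_zero]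
    rw [Asymptotics.isLittleO_iff]
    intro ε hε
    filter_upwards [Metric.ball_mem_nhds (0:ℝ) hε] with u hu
    have h1 : |max u 0| ≤ |u| := by
      rcases le_or_gt u 0 with h | h
      · simp [max_eq_right h]
      · simp [max_eq_left h.le]
    have h2 : ‖(max u 0)^2‖ ≤ |u| * |u| := by
      rw [sq]; simp only [Real.norm_eq_abs, abs_mul]
      exact mul_le_mul h1 h1 (abs_nonneg _) (abs_nonneg _)
    have h3 : |u| < ε := by simpa [Real.dist_eq] using hu
    calc ‖(max u 0)^2 - 0^2 - u • (0:ℝ)‖ = ‖(max u 0)^2‖ := by simp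
      _ ≤ |u| * |u| := h2
      _ ≤ ε * ‖u‖ := by
          rw [Real.norm_eq_abs]
          exact mul_le_mul_of_nonneg_right h3.le (abs_nonneg _)
  · have : (fun u : ℝ => (max u 0)^2) =ᶠ[nhds t] fun u => u^2 := by
      filter_upwards [eventually_gt_nhds ht] with u hu
      simp [max_eq_left hu.le]
    rw [max_eq_left ht.le]
    have h2 : HasDerivAt (fun u : ℝ => u^2) (2*t) t := by
      simpa using (hasDerivAt_pow 2 t)
    exact h2.congr_of_eventuallyEq this

lemma kkt_penalty_deriv {E : Type*} [NormedAddCommGroup E] [InnerProductSpace ℝ E]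
    {s t : ℕ} (f : E → ℝ) (p : Fin s → E → ℝ) (q : Fin t → E → ℝ)
    (hf : ContDiff ℝ 1 f) (hp : ∀ i, ContDiff ℝ 1 (p i)) (hq : ∀ j, ContDiff ℝ 1 (q j))
    (K : ℝ) (xbar y : E) :
    HasFDerivAt (fun x => f x + (K/2) * ∑ i, (p i x)^2 + (K/2) * ∑ j, (max (q j x) 0)^2
        + ⟪x - xbar, x - xbar⟫)
      (fderiv ℝ f y + (∑ i, (K * p i y) • fderiv ℝ (p i) y)
        + (∑ j, (K * max (q j y) 0) • fderiv ℝ (q j) y) + (2:ℝ) • (innerSL ℝ (y - xbar))) y := by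
  have hfd : HasFDerivAt f (fderiv ℝ f y) y := (hf.differentiable one_ne_zero y).hasFDerivAt
  have hpd : ∀ i, HasFDerivAt (p i) (fderiv ℝ (p i) y) y :=
    fun i => ((hp i).differentiable one_ne_zero y).hasFDerivAt
  have hqd : ∀ j, HasFDerivAt (q j) (fderiv ℝ (q j) y) y :=
    fun j => ((hq j).differentiable one_ne_zero y).hasFDerivAt
  have hP : HasFDerivAt (fun x => (K/2) * ∑ i, (p i x)^2)
      ((K/2) • ∑ i, (2 * p i y ^ 1) • fderiv ℝ (p i) y) y := by
    have h := (HasFDerivAt.sum (u := Finset.univ) (fun i _ => (hasDerivAt_pow 2 (p i y)).comp_hasFDerivAt y (hpd i))).const_mul (K/2)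
    simpa [Function.comp_def, Finset.sum_apply] using h
  have hQ : HasFDerivAt (fun x => (K/2) * ∑ j, (max (q j x) 0)^2)
      ((K/2) • ∑ j, (2 * max (q j y) 0) • fderiv ℝ (q j) y) y := by
    have h := (HasFDerivAt.sum (u := Finset.univ) (fun j _ =>
      (hasDerivAt_posPartSq (q j y)).comp_hasFDerivAt y (hqd j))).const_mul (K/2)
    simpa [Function.comp_def, Finset.sum_apply] using h
  have hid : HasFDerivAt (fun x : E => x - xbar) (ContinuousLinearMap.id ℝ E) y :=
    (hasFDerivAt_id y).sub_const xbar
  have hI := hid.inner ℝ hid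
  have htot := ((hfd.add hP).add hQ).add hI
  refine htot.congr_fderiv (Eq.symm ?_)
  ext v
  simp only [ContinuousLinearMap.add_apply, ContinuousLinearMap.smul_apply,
    ContinuousLinearMap.coe_sum', Finset.sum_apply, ContinuousLinearMap.coe_comp',
    Function.comp_apply, ContinuousLinearMap.prod_apply, fderivInnerCLM_apply,
    ContinuousLinearMap.coe_id', id_eq, innerSL_apply_apply, smul_eq_mul, pow_one,
    real_inner_comm]
  congr 1
  · congr 1
    · congr 1
      rw [Finset.mul_sum]
      exact Finset.sum_congr rfl fun i _ => by ring
    · rw [Finset.mul_sum]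
      exact Finset.sum_congr rfl fun j _ => by ring
  · ring

set_option maxHeartbeats 1000000 in
theorem kkt_from_mfcq {n s t : ℕ}
    (f : EuclideanSpace ℝ (Fin n) → ℝ)
    (p : Fin s → EuclideanSpace ℝ (Fin n) → ℝ)
    (q : Fin t → EuclideanSpace ℝ (Fin n) → ℝ)
    (hf : ContDiff ℝ 1 f) (hp : ∀ i, ContDiff ℝ 1 (p i)) (hq : ∀ j, ContDiff ℝ 1 (q j))
    (xbar : EuclideanSpace ℝ (Fin n))
    (hfeas : (∀ i, p i xbar = 0) ∧ (∀ j, q j xbar ≤ 0))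
    (hlocmin : ∃ U ∈ nhds xbar, ∀ x ∈ U,
      ((∀ i, p i x = 0) ∧ (∀ j, q j x ≤ 0)) → f xbar ≤ f x)
    (hMFCQ : ∀ (lam : Fin s → ℝ) (mu : Fin t → ℝ),
      (∀ j, 0 ≤ mu j) → (∀ j, q j xbar < 0 → mu j = 0) →
      (∑ i, lam i • gradient (p i) xbar) + (∑ j, mu j • gradient (q j) xbar) = 0 →
      lam = 0 ∧ mu = 0) :
    ∃ (lam : Fin s → ℝ) (mu : Fin t → ℝ),
      (∀ j, 0 ≤ mu j) ∧ (∀ j, q j xbar < 0 → mu j = 0) ∧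
      gradient f xbar + (∑ i, lam i • gradient (p i) xbar)
        + (∑ j, mu j • gradient (q j) xbar) = 0 := by
  classical
  obtain ⟨hfeas_p, hfeas_q⟩ := hfeas
  obtain ⟨U, hU, hmin⟩ := hlocmin
  obtain ⟨r, hr0, hrU⟩ : ∃ r > 0, Metric.closedBall xbar r ⊆ U := by
    rcases Metric.mem_nhds_iff.1 hU with ⟨ε, hε, hball⟩
    refine ⟨ε/2, by positivity, fun y hy => hball ?_⟩
    have : dist y xbar ≤ ε/2 := Metric.mem_closedBall.1 hy
    exact Metric.mem_ball.2 (by linarith)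
  set B := Metric.closedBall xbar r with hBdef
  have hBcompact : IsCompact B := isCompact_closedBall _ _
  have hxbarB : xbar ∈ B := Metric.mem_closedBall_self hr0.le
  set K : ℕ → ℝ := fun k => (k : ℝ) + 1 with hKdef
  have hKpos : ∀ k, (0:ℝ) < K k := fun k => by rw [hKdef]; positivity
  clear_value K
  set F : ℕ → EuclideanSpace ℝ (Fin n) → ℝ := fun k x => f x + (K k/2) * ∑ i, (p i x)^2
      + (K k/2) * ∑ j, (max (q j x) 0)^2 + ⟪x - xbar, x - xbar⟫ with hFdef
  have hFderiv : ∀ k y, HasFDerivAt (F k)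
      (fderiv ℝ f y + (∑ i, (K k * p i y) • fderiv ℝ (p i) y)
        + (∑ j, (K k * max (q j y) 0) • fderiv ℝ (q j) y)
        + (2:ℝ) • (innerSL ℝ (y - xbar))) y :=
    fun k y => kkt_penalty_deriv f p q hf hp hq (K k) xbar y
  have hFdiff : ∀ k, Differentiable ℝ (F k) := fun k y => (hFderiv k y).differentiableAt
  have hFcont : ∀ k, Continuous (F k) := fun k => (hFdiff k).continuous
  have hex : ∀ k, ∃ x ∈ B, IsMinOn (F k) B x :=
    fun k => hBcompact.exists_isMinOn ⟨xbar, hxbarB⟩ (hFcont k).continuousOn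
  choose z hzB hzmin using hex
  -- lower bound for f on B
  obtain ⟨w, hwB, hwmin⟩ := hBcompact.exists_isMinOn ⟨xbar, hxbarB⟩
    (hf.continuous).continuousOn
  set C : ℝ := f xbar - f w with hCdef
  clear_value C
  have hFzxbar : ∀ k, F k xbar = f xbar := by
    intro k
    simp [hFdef, hfeas_p, fun j => max_eq_right (hfeas_q j)]
  have hFz : ∀ k, f (z k) + (K k/2) * (∑ i, (p i (z k))^2)
      + (K k/2) * (∑ j, (max (q j (z k)) 0)^2) + ⟪z k - xbar, z k - xbar⟫ ≤ f xbar := by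
    intro k
    have h : F k (z k) ≤ F k xbar := hzmin k hxbarB
    rw [hFzxbar k] at h
    simpa [hFdef] using h
  have hsp : ∀ k, (0:ℝ) ≤ ∑ i, (p i (z k))^2 :=
    fun k => Finset.sum_nonneg fun i _ => sq_nonneg _
  have hsq : ∀ k, (0:ℝ) ≤ ∑ j, (max (q j (z k)) 0)^2 :=
    fun k => Finset.sum_nonneg fun j _ => sq_nonneg _
  have hinn : ∀ k, (0:ℝ) ≤ ⟪z k - xbar, z k - xbar⟫ := fun k => real_inner_self_nonneg
  have hfw : ∀ k, f w ≤ f (z k) := fun k => isMinOn_iff.1 hwmin _ (hzB k)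
  have hP1 : ∀ k i, (p i (z k))^2 ≤ 2*C/(K k) := by
    intro k i
    rw [le_div_iff₀ (hKpos k)]
    have h1 : (p i (z k))^2 ≤ ∑ i', (p i' (z k))^2 :=
      Finset.single_le_sum (f := fun i' => (p i' (z k))^2) (fun i' _ => sq_nonneg _)
        (Finset.mem_univ i)
    have h2 := hFz k; have h3 := hfw k; have h4 := hsq k; have h5 := hinn k
    have h6 := hKpos k
    have hm1 : K k/2 * (p i (z k))^2 ≤ K k/2 * ∑ i', (p i' (z k))^2 :=
      mul_le_mul_of_nonneg_left h1 (by positivity)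
    have hm2 : (0:ℝ) ≤ K k/2 * ∑ j, (max (q j (z k)) 0)^2 := mul_nonneg (by positivity) h4
    simp only [hCdef]
    linarith
  have hQ1 : ∀ k j, (max (q j (z k)) 0)^2 ≤ 2*C/(K k) := by
    intro k j
    rw [le_div_iff₀ (hKpos k)]
    have h1 : (max (q j (z k)) 0)^2 ≤ ∑ j', (max (q j' (z k)) 0)^2 :=
      Finset.single_le_sum (f := fun j' => (max (q j' (z k)) 0)^2) (fun j' _ => sq_nonneg _)
        (Finset.mem_univ j)
    have h2 := hFz k; have h3 := hfw k; have h4 := hsp k; have h5 := hinn k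
    have h6 := hKpos k
    have hm1 : K k/2 * (max (q j (z k)) 0)^2 ≤ K k/2 * ∑ j', (max (q j' (z k)) 0)^2 :=
      mul_le_mul_of_nonneg_left h1 (by positivity)
    have hm2 : (0:ℝ) ≤ K k/2 * ∑ i, (p i (z k))^2 := mul_nonneg (by positivity) h4
    simp only [hCdef]
    linarith
  have hfI : ∀ k, f (z k) + ‖z k - xbar‖^2 ≤ f xbar := by
    intro k
    have h2 := hFz k
    rw [real_inner_self_eq_norm_sq] at h2
    have h4 := hsp k; have h5 := hsq k; have h6 := (hKpos k).le
    have h7 : (0:ℝ) ≤ (K k/2) * ∑ i, (p i (z k))^2 := mul_nonneg (by positivity) h4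
    have h8 : (0:ℝ) ≤ (K k/2) * ∑ j, (max (q j (z k)) 0)^2 := mul_nonneg (by positivity) h5
    linarith
  -- convergent subsequence of minimizers
  obtain ⟨xstar, hxstarB, φ, hφmono, hφtend⟩ := hBcompact.tendsto_subseq hzB
  have hKφtop : Filter.Tendsto (fun k => K (φ k)) Filter.atTop Filter.atTop := by
    simp only [hKdef]
    exact Filter.tendsto_atTop_add_const_right _ 1
      (tendsto_natCast_atTop_atTop.comp hφmono.tendsto_atTop)
  have h2C : Filter.Tendsto (fun k => 2*C/(K (φ k))) Filter.atTop (nhds 0) :=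
    Filter.Tendsto.div_atTop tendsto_const_nhds hKφtop
  have hps : ∀ i, p i xstar = 0 := by
    intro i
    have h1 : Filter.Tendsto (fun k => (p i (z (φ k)))^2) Filter.atTop
        (nhds ((p i xstar)^2)) := by
      simpa [Function.comp_def] using (((hp i).continuous.tendsto xstar).comp hφtend).pow 2
    have h2 : (p i xstar)^2 ≤ 0 :=
      le_of_tendsto_of_tendsto' h1 h2C (fun k => hP1 (φ k) i)
    have := le_antisymm h2 (sq_nonneg _)
    exact pow_eq_zero_iff (two_ne_zero) |>.1 this
  have hqs : ∀ j, q j xstar ≤ 0 := by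
    intro j
    have h1 : Filter.Tendsto (fun k => (max (q j (z (φ k))) 0)^2) Filter.atTop
        (nhds ((max (q j xstar) 0)^2)) := by
      simpa [Function.comp_def] using
        ((((hq j).continuous.tendsto xstar).comp hφtend).max tendsto_const_nhds).pow 2
    have h2 : (max (q j xstar) 0)^2 ≤ 0 :=
      le_of_tendsto_of_tendsto' h1 h2C (fun k => hQ1 (φ k) j)
    have h3 := le_antisymm h2 (sq_nonneg _)
    have h4 : max (q j xstar) 0 = 0 := pow_eq_zero_iff (two_ne_zero) |>.1 h3
    calc q j xstar ≤ max (q j xstar) 0 := le_max_left _ _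
      _ = 0 := h4
  have hfxstar : f xbar ≤ f xstar := hmin xstar (hrU hxstarB) ⟨hps, hqs⟩
  have hxstar : xstar = xbar := by
    have h1 : Filter.Tendsto (fun k => f (z (φ k)) + ‖z (φ k) - xbar‖^2)
        Filter.atTop (nhds (f xstar + ‖xstar - xbar‖^2)) := by
      apply Filter.Tendsto.add
      · simpa [Function.comp_def] using (hf.continuous.tendsto xstar).comp hφtend
      · simpa [Function.comp_def] using
          (((continuous_id.sub continuous_const).norm.pow 2).tendsto xstar).comp hφtend
    have h2 : f xstar + ‖xstar - xbar‖^2 ≤ f xbar :=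
      le_of_tendsto h1 (Filter.Eventually.of_forall fun k => hfI (φ k))
    have h3 : ‖xstar - xbar‖^2 ≤ 0 := by linarith
    have h4 : ‖xstar - xbar‖ = 0 := by nlinarith [norm_nonneg (xstar - xbar)]
    have h5 : xstar - xbar = 0 := norm_eq_zero.1 h4
    exact sub_eq_zero.1 h5
  rw [hxstar] at hφtend
  -- stationarity at interior minimizers
  have hev : ∀ᶠ k in Filter.atTop, z (φ k) ∈ Metric.ball xbar r :=
    hφtend (Metric.ball_mem_nhds xbar hr0)
  have hstat : ∀ᶠ k in Filter.atTop,
      fderiv ℝ f (z (φ k)) + (∑ i, (K (φ k) * p i (z (φ k))) • fderiv ℝ (p i) (z (φ k)))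
        + (∑ j, (K (φ k) * max (q j (z (φ k))) 0) • fderiv ℝ (q j) (z (φ k)))
        + (2:ℝ) • (innerSL ℝ (z (φ k) - xbar)) = 0 := by
    filter_upwards [hev] with k hk
    have hloc : IsLocalMin (F (φ k)) (z (φ k)) :=
      (hzmin (φ k)).isLocalMin (Filter.mem_of_superset
        (Metric.isOpen_ball.mem_nhds hk) Metric.ball_subset_closedBall)
    exact hloc.hasFDerivAt_eq_zero (hFderiv (φ k) (z (φ k)))
  -- multiplier sequences
  set a : ℕ → Fin s → ℝ := fun k i => K (φ k) * p i (z (φ k)) with hadef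
  set b : ℕ → Fin t → ℝ := fun k j => K (φ k) * max (q j (z (φ k))) 0 with hbdef
  set W := ℝ × (Fin s → ℝ) × (Fin t → ℝ) with hWdef
  set u : ℕ → W := fun k => ‖((1:ℝ), a k, b k)‖⁻¹ • ((1:ℝ), a k, b k) with hudef
  have hwnorm : ∀ k, 1 ≤ ‖((1:ℝ), a k, b k)‖ := fun k => by
    simpa using norm_fst_le ((1:ℝ), a k, b k)
  have hwpos : ∀ k, 0 < ‖((1:ℝ), a k, b k)‖ := fun k => lt_of_lt_of_le one_pos (hwnorm k)
  have husphere : ∀ k, u k ∈ Metric.sphere (0 : W) 1 := by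
    intro k
    rw [mem_sphere_zero_iff_norm, hudef]
    simp only [norm_smul, norm_inv, norm_norm]
    exact inv_mul_cancel₀ (hwpos k).ne'
  obtain ⟨ubar, hubar, ψ, hψmono, hψtend⟩ := (isCompact_sphere (0 : W) 1).tendsto_subseq husphere
  obtain ⟨τ0, lam0, mu0⟩ := ubar
  set N : ℕ → ℝ := fun k => ‖((1:ℝ), a (ψ k), b (ψ k))‖⁻¹ with hNdef
  have hτ' : Filter.Tendsto N Filter.atTop (nhds τ0) := by
    have := (continuous_fst.tendsto ((τ0, lam0, mu0) : W)).comp hψtend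
    simpa [hudef, hNdef, Function.comp_def, mul_one] using this
  have hlam : ∀ i, Filter.Tendsto (fun k => N k * a (ψ k) i) Filter.atTop (nhds (lam0 i)) := by
    intro i
    have := (((continuous_apply i).comp (continuous_fst.comp continuous_snd)).tendsto
      ((τ0, lam0, mu0) : W)).comp hψtend
    simpa [hudef, hNdef, Function.comp_def] using this
  have hmu : ∀ j, Filter.Tendsto (fun k => N k * b (ψ k) j) Filter.atTop (nhds (mu0 j)) := by
    intro j
    have := (((continuous_apply j).comp (continuous_snd.comp continuous_snd)).tendsto
      ((τ0, lam0, mu0) : W)).comp hψtend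
    simpa [hudef, hNdef, Function.comp_def] using this
  have hNnn : ∀ k, (0:ℝ) ≤ N k := fun k => inv_nonneg.2 (norm_nonneg _)
  have hzt : Filter.Tendsto (fun k => z (φ (ψ k))) Filter.atTop (nhds xbar) := by
    simpa [Function.comp_def] using hφtend.comp hψmono.tendsto_atTop
  -- limits of derivatives
  have hfc : Filter.Tendsto (fun k => fderiv ℝ f (z (φ (ψ k)))) Filter.atTop
      (nhds (fderiv ℝ f xbar)) := ((hf.continuous_fderiv one_ne_zero).tendsto xbar).comp hzt
  have hpc : ∀ i, Filter.Tendsto (fun k => fderiv ℝ (p i) (z (φ (ψ k)))) Filter.atTop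
      (nhds (fderiv ℝ (p i) xbar)) :=
    fun i => (((hp i).continuous_fderiv one_ne_zero).tendsto xbar).comp hzt
  have hqc : ∀ j, Filter.Tendsto (fun k => fderiv ℝ (q j) (z (φ (ψ k)))) Filter.atTop
      (nhds (fderiv ℝ (q j) xbar)) :=
    fun j => (((hq j).continuous_fderiv one_ne_zero).tendsto xbar).comp hzt
  have hic : Filter.Tendsto (fun k => (innerSL ℝ (z (φ (ψ k)) - xbar) :
      EuclideanSpace ℝ (Fin n) →L[ℝ] ℝ)) Filter.atTop (nhds (innerSL ℝ (xbar - xbar))) :=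
    ((innerSL ℝ).continuous.tendsto _).comp (hzt.sub_const xbar)
  -- the scaled stationarity sequence and its limit
  set S : ℕ → (EuclideanSpace ℝ (Fin n) →L[ℝ] ℝ) := fun k =>
    N k • fderiv ℝ f (z (φ (ψ k)))
      + (∑ i, (N k * a (ψ k) i) • fderiv ℝ (p i) (z (φ (ψ k))))
      + (∑ j, (N k * b (ψ k) j) • fderiv ℝ (q j) (z (φ (ψ k))))
      + (N k * 2) • innerSL ℝ (z (φ (ψ k)) - xbar) with hSdef
  have hSlim : Filter.Tendsto S Filter.atTop (nhds
      (τ0 • fderiv ℝ f xbar + (∑ i, lam0 i • fderiv ℝ (p i) xbar)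
        + (∑ j, mu0 j • fderiv ℝ (q j) xbar) + (τ0 * 2) • innerSL ℝ (xbar - xbar))) := by
    refine ((((hτ'.smul hfc).add ?_).add ?_).add ((hτ'.mul_const 2).smul hic))
    · exact tendsto_finset_sum _ (fun i _ => (hlam i).smul (hpc i))
    · exact tendsto_finset_sum _ (fun j _ => (hmu j).smul (hqc j))
  have hstatψ := hψmono.tendsto_atTop.eventually hstat
  have hS0 : S =ᶠ[Filter.atTop] (fun _ => 0) := by
    filter_upwards [hstatψ] with k hk
    have hexp : S k = N k • (fderiv ℝ f (z (φ (ψ k)))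
        + (∑ i, (K (φ (ψ k)) * p i (z (φ (ψ k)))) • fderiv ℝ (p i) (z (φ (ψ k))))
        + (∑ j, (K (φ (ψ k)) * max (q j (z (φ (ψ k)))) 0) • fderiv ℝ (q j) (z (φ (ψ k))))
        + (2:ℝ) • innerSL ℝ (z (φ (ψ k)) - xbar)) := by
      simp only [hSdef, hadef, hbdef, smul_add, Finset.smul_sum, smul_smul]
    rw [hexp, hk, smul_zero]
  have hL0 : τ0 • fderiv ℝ f xbar + (∑ i, lam0 i • fderiv ℝ (p i) xbar)
      + (∑ j, mu0 j • fderiv ℝ (q j) xbar) + (τ0 * 2) • innerSL ℝ (xbar - xbar) = 0 :=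
    tendsto_nhds_unique hSlim (Filter.Tendsto.congr' hS0.symm tendsto_const_nhds)
  rw [sub_self, map_zero, smul_zero, add_zero] at hL0
  -- convert to gradients
  have hG : τ0 • gradient f xbar + (∑ i, lam0 i • gradient (p i) xbar)
      + (∑ j, mu0 j • gradient (q j) xbar) = 0 := by
    have h := congrArg (InnerProductSpace.toDual ℝ (EuclideanSpace ℝ (Fin n))).symm hL0
    simpa [gradient, map_add, map_smul, map_sum] using h
  -- signs
  have hτnn : 0 ≤ τ0 := ge_of_tendsto' hτ' hNnn
  have hmunn : ∀ j, 0 ≤ mu0 j := by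
    intro j
    refine ge_of_tendsto' (hmu j) (fun k => ?_)
    have hb : (0:ℝ) ≤ b (ψ k) j := by
      simp only [hbdef]
      exact mul_nonneg (hKpos _).le (le_max_right _ _)
    exact mul_nonneg (hNnn k) hb
  -- complementarity
  have hcompl : ∀ j, q j xbar < 0 → mu0 j = 0 := by
    intro j hj
    have htq : Filter.Tendsto (fun k => q j (z (φ (ψ k)))) Filter.atTop (nhds (q j xbar)) :=
      ((hq j).continuous.tendsto xbar).comp hzt
    have hqev : ∀ᶠ k in Filter.atTop, q j (z (φ (ψ k))) < 0 := htq (Iio_mem_nhds hj)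
    have hev0 : (fun k => N k * b (ψ k) j) =ᶠ[Filter.atTop] (fun _ => 0) := by
      filter_upwards [hqev] with k hk
      simp [hbdef, max_eq_right hk.le]
    exact tendsto_nhds_unique (hmu j) (Filter.Tendsto.congr' hev0.symm tendsto_const_nhds)
  -- τ0 cannot vanish
  have hτne : τ0 ≠ 0 := by
    intro h0
    have hG' := hG
    rw [h0, zero_smul, zero_add] at hG'
    obtain ⟨hl, hm⟩ := hMFCQ lam0 mu0 hmunn hcompl hG'
    have : ((τ0, lam0, mu0) : W) = 0 := by
      rw [h0, hl, hm]; rfl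
    rw [this] at hubar
    simp at hubar
  -- final multipliers
  refine ⟨fun i => τ0⁻¹ * lam0 i, fun j => τ0⁻¹ * mu0 j, ?_, ?_, ?_⟩
  · exact fun j => mul_nonneg (inv_nonneg.2 hτnn) (hmunn j)
  · intro j hj
    show τ0⁻¹ * mu0 j = 0
    rw [hcompl j hj, mul_zero]
  · have h2 : τ0⁻¹ • (τ0 • gradient f xbar + (∑ i, lam0 i • gradient (p i) xbar)
        + (∑ j, mu0 j • gradient (q j) xbar)) = 0 := by rw [hG, smul_zero]
    rw [smul_add, smul_add, smul_smul, inv_mul_cancel₀ hτne, one_smul,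
      Finset.smul_sum, Finset.smul_sum] at h2
    simp only [smul_smul] at h2
    exact h2
end

section
/- Let x̄ be a feasible point of the nonlinear program (NLP) at which the Mangasarian–Fromovitz constraint qualification holds. Then the set of multiplier vectors at x̄, namely {(λ, μ) ∈ ℝ^s × ℝ^t : μ ≥ 0 componentwise, μ_j = 0 for all j with q_j(x̄) < 0, and ∇f(x̄) + Σ_{i=1}^s λ_i ∇p_i(x̄) + Σ_{j=1}^t μ_j ∇q_j(x̄) = 0}, is compact. -/
open scoped RealInnerProductSpace

theorem multiplier_set_compact_nlp {n s t : ℕ}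
    (f : EuclideanSpace ℝ (Fin n) → ℝ)
    (p : Fin s → EuclideanSpace ℝ (Fin n) → ℝ)
    (q : Fin t → EuclideanSpace ℝ (Fin n) → ℝ)
    (hf : ContDiff ℝ 1 f) (hp : ∀ i, ContDiff ℝ 1 (p i)) (hq : ∀ j, ContDiff ℝ 1 (q j))
    (xbar : EuclideanSpace ℝ (Fin n))
    (hfeas : (∀ i, p i xbar = 0) ∧ (∀ j, q j xbar ≤ 0))
    (hMFCQ : ∀ (lam : Fin s → ℝ) (mu : Fin t → ℝ),
      (∀ j, 0 ≤ mu j) → (∀ j, q j xbar < 0 → mu j = 0) →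
      (∑ i, lam i • gradient (p i) xbar) + (∑ j, mu j • gradient (q j) xbar) = 0 →
      lam = 0 ∧ mu = 0) :
    IsCompact {lm : (Fin s → ℝ) × (Fin t → ℝ) |
      (∀ j, 0 ≤ lm.2 j) ∧ (∀ j, q j xbar < 0 → lm.2 j = 0) ∧
      gradient f xbar + (∑ i, lm.1 i • gradient (p i) xbar)
        + (∑ j, lm.2 j • gradient (q j) xbar) = 0} := by
  classical
  set g : Fin s → EuclideanSpace ℝ (Fin n) := fun i => gradient (p i) xbar
  set h : Fin t → EuclideanSpace ℝ (Fin n) := fun j => gradient (q j) xbar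
  set F : EuclideanSpace ℝ (Fin n) := gradient f xbar
  set T : (Fin s → ℝ) × (Fin t → ℝ) → EuclideanSpace ℝ (Fin n) :=
    fun lm => (∑ i, lm.1 i • g i) + (∑ j, lm.2 j • h j) with hT
  have hTcont : Continuous T := by
    apply Continuous.add
    · exact continuous_finset_sum _ fun i _ =>
        (((continuous_apply i).comp continuous_fst).smul continuous_const)
    · exact continuous_finset_sum _ fun j _ =>
        (((continuous_apply j).comp continuous_snd).smul continuous_const)
  have hThom : ∀ (a : ℝ) (x : (Fin s → ℝ) × (Fin t → ℝ)), T (a • x) = a • T x := by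
    intro a x
    simp [hT, Finset.smul_sum, smul_smul]
  set S : Set ((Fin s → ℝ) × (Fin t → ℝ)) :=
    {lm | (∀ j, 0 ≤ lm.2 j) ∧ (∀ j, q j xbar < 0 → lm.2 j = 0) ∧ F + T lm = 0} with hS
  have hsets : {lm : (Fin s → ℝ) × (Fin t → ℝ) |
      (∀ j, 0 ≤ lm.2 j) ∧ (∀ j, q j xbar < 0 → lm.2 j = 0) ∧
      gradient f xbar + (∑ i, lm.1 i • gradient (p i) xbar)
        + (∑ j, lm.2 j • gradient (q j) xbar) = 0} = S := by
    ext lm; simp [hS, hT, add_assoc, g, h, F]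
  rw [hsets]
  -- closedness
  have hSclosed : IsClosed S := by
    have h1 : IsClosed {lm : (Fin s → ℝ) × (Fin t → ℝ) | ∀ j, 0 ≤ lm.2 j} := by
      rw [Set.setOf_forall]
      exact isClosed_iInter fun j =>
        isClosed_le continuous_const ((continuous_apply j).comp continuous_snd)
    have h2 : IsClosed {lm : (Fin s → ℝ) × (Fin t → ℝ) | ∀ j, q j xbar < 0 → lm.2 j = 0} := by
      rw [Set.setOf_forall]
      refine isClosed_iInter fun j => ?_
      by_cases hj : q j xbar < 0
      · simp only [hj, true_implies]
        exact isClosed_eq ((continuous_apply j).comp continuous_snd) continuous_const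
      · simp only [hj, false_implies, Set.setOf_true]
        exact isClosed_univ
    have h3 : IsClosed {lm : (Fin s → ℝ) × (Fin t → ℝ) | F + T lm = 0} :=
      isClosed_eq (continuous_const.add hTcont) continuous_const
    have : S = {lm | ∀ j, 0 ≤ lm.2 j} ∩ ({lm | ∀ j, q j xbar < 0 → lm.2 j = 0} ∩
        {lm | F + T lm = 0}) := by
      ext lm; simp [hS, and_assoc]
    rw [this]
    exact h1.inter (h2.inter h3)
  -- the cone ∩ sphere
  set K : Set ((Fin s → ℝ) × (Fin t → ℝ)) :=
    {lm | (∀ j, 0 ≤ lm.2 j) ∧ (∀ j, q j xbar < 0 → lm.2 j = 0) ∧ ‖lm‖ = 1} with hK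
  have hKsub : K ⊆ Metric.sphere 0 1 := by
    intro x hx
    simpa [mem_sphere_iff_norm] using hx.2.2
  have hKclosed : IsClosed K := by
    have h1 : IsClosed {lm : (Fin s → ℝ) × (Fin t → ℝ) | ∀ j, 0 ≤ lm.2 j} := by
      rw [Set.setOf_forall]
      exact isClosed_iInter fun j =>
        isClosed_le continuous_const ((continuous_apply j).comp continuous_snd)
    have h2 : IsClosed {lm : (Fin s → ℝ) × (Fin t → ℝ) | ∀ j, q j xbar < 0 → lm.2 j = 0} := by
      rw [Set.setOf_forall]
      refine isClosed_iInter fun j => ?_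
      by_cases hj : q j xbar < 0
      · simp only [hj, true_implies]
        exact isClosed_eq ((continuous_apply j).comp continuous_snd) continuous_const
      · simp only [hj, false_implies, Set.setOf_true]
        exact isClosed_univ
    have h3 : IsClosed {lm : (Fin s → ℝ) × (Fin t → ℝ) | ‖lm‖ = 1} :=
      isClosed_eq continuous_norm continuous_const
    have : K = {lm | ∀ j, 0 ≤ lm.2 j} ∩ ({lm | ∀ j, q j xbar < 0 → lm.2 j = 0} ∩
        {lm | ‖lm‖ = 1}) := by
      ext lm; simp [hK, and_assoc]
    rw [this]
    exact h1.inter (h2.inter h3)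
  have hKcompact : IsCompact K :=
    (isCompact_sphere (0 : (Fin s → ℝ) × (Fin t → ℝ)) 1).of_isClosed_subset hKclosed hKsub
  have hTpos : ∀ x ∈ K, 0 < ‖T x‖ := by
    intro x hx
    rcases hx with ⟨hx1, hx2, hx3⟩
    by_contra hc
    push_neg at hc
    have hT0 : T x = 0 := by
      have := le_antisymm hc (norm_nonneg _)
      exact norm_eq_zero.mp this
    have := hMFCQ x.1 x.2 hx1 hx2 hT0
    have hx0 : x = 0 := Prod.ext this.1 this.2
    rw [hx0] at hx3
    simp at hx3
  -- boundedness
  have hbdd : Bornology.IsBounded S := by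
    by_cases hKne : K.Nonempty
    · obtain ⟨x₀, hx₀K, hx₀min⟩ := hKcompact.exists_isMinOn hKne (hTcont.norm.continuousOn)
      set c : ℝ := ‖T x₀‖ with hc
      have hcpos : 0 < c := hTpos x₀ hx₀K
      refine (Metric.isBounded_closedBall (x := (0 : (Fin s → ℝ) × (Fin t → ℝ)))
        (r := ‖F‖ / c)).subset ?_
      intro x hx
      rcases hx with ⟨hx1, hx2, hx3⟩
      rw [Metric.mem_closedBall, dist_zero_right]
      by_cases hx0 : x = 0
      · rw [hx0]; simp; positivity
      · have hnx : (0 : ℝ) < ‖x‖ := norm_pos_iff.mpr hx0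
        set u := ‖x‖⁻¹ • x with hu
        have huK : u ∈ K := by
          refine ⟨fun j => ?_, fun j hj => ?_, ?_⟩
          · have : u.2 j = ‖x‖⁻¹ * x.2 j := rfl
            rw [this]
            exact mul_nonneg (inv_nonneg.mpr hnx.le) (hx1 j)
          · have : u.2 j = ‖x‖⁻¹ * x.2 j := rfl
            rw [this, hx2 j hj, mul_zero]
          · rw [hu, norm_smul, norm_inv, norm_norm, inv_mul_cancel₀ hnx.ne']
        have hTx : T x = -F := by
          have := hx3
          linear_combination (norm := module) this
        have hTu : ‖T u‖ = ‖x‖⁻¹ * ‖F‖ := by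
          rw [hu, hThom, norm_smul, hTx, norm_neg, norm_inv, norm_norm]
        have hle : c ≤ ‖x‖⁻¹ * ‖F‖ := by
          have := hx₀min huK
          simpa [hTu] using this
        rw [le_div_iff₀ hcpos]
        calc ‖x‖ * c ≤ ‖x‖ * (‖x‖⁻¹ * ‖F‖) := by
              exact mul_le_mul_of_nonneg_left hle hnx.le
          _ = ‖F‖ := by field_simp
    · refine (Metric.isBounded_closedBall (x := (0 : (Fin s → ℝ) × (Fin t → ℝ)))
        (r := 0)).subset ?_
      intro x hx
      rcases hx with ⟨hx1, hx2, hx3⟩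
      rw [Metric.mem_closedBall, dist_zero_right]
      by_contra hc
      push_neg at hc
      have hnx : (0 : ℝ) < ‖x‖ := hc
      refine hKne ⟨‖x‖⁻¹ • x, fun j => ?_, fun j hj => ?_, ?_⟩
      · exact mul_nonneg (inv_nonneg.mpr hnx.le) (hx1 j)
      · show ‖x‖⁻¹ * x.2 j = 0
        rw [hx2 j hj, mul_zero]
      · rw [norm_smul, norm_inv, norm_norm, inv_mul_cancel₀ hnx.ne']
  exact Metric.isCompact_of_isClosed_isBounded hSclosed hbdd
end

section
/- Let x̄ be a feasible point of the nonlinear program (NLP) at which a multiplier vector exists and the Mangasarian–Fromovitz constraint qualification holds. Then there exists ε₀′ > 0 such that for every ε′ ∈ (0, ε₀′) there exists δ′ > 0 with the following property: for any triple (x, λ, μ) ∈ ℝ^n × ℝ^s × ℝ^t with μ ≥ 0 componentwise satisfying (i) ‖x − x̄‖ < δ′, (ii) μ_j = 0 whenever q_j(x) < −δ′, and (iii) ‖∇f(x) + Σ_{i=1}^s λ_i ∇p_i(x) + Σ_{j=1}^t μ_j ∇q_j(x)‖ < δ′, every index set J ⊆ {1,…,t} satisfying q_j(x) > −ε′ for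 all j ∈ J and μ_j < ε′ for all j ∉ J is sufficient for x̄. -/
open scoped RealInnerProductSpace

/-- The index set `J` is sufficient at `xbar` for the nonlinear program with data `f, p, q`. -/
def SufficientIndexSet {n s t : ℕ}
    (f : EuclideanSpace ℝ (Fin n) → ℝ)
    (p : Fin s → EuclideanSpace ℝ (Fin n) → ℝ)
    (q : Fin t → EuclideanSpace ℝ (Fin n) → ℝ)
    (xbar : EuclideanSpace ℝ (Fin n)) (J : Set (Fin t)) : Prop :=
  (∀ j ∈ J, q j xbar = 0) ∧
  ∃ (lam : Fin s → ℝ) (mu : Fin t → ℝ),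
    (∀ j, 0 ≤ mu j) ∧ (∀ j, j ∉ J → mu j = 0) ∧
    gradient f xbar + (∑ i, lam i • gradient (p i) xbar)
      + (∑ j, mu j • gradient (q j) xbar) = 0

section auxT
variable {n s t : ℕ}

private noncomputable def Tmap (p : Fin s → EuclideanSpace ℝ (Fin n) → ℝ)
    (q : Fin t → EuclideanSpace ℝ (Fin n) → ℝ)
    (x : EuclideanSpace ℝ (Fin n)) (m : (Fin s → ℝ) × (Fin t → ℝ)) :
    EuclideanSpace ℝ (Fin n) :=
  (∑ i, m.1 i • gradient (p i) x) + (∑ j, m.2 j • gradient (q j) x)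

private lemma Tmap_cont (p : Fin s → EuclideanSpace ℝ (Fin n) → ℝ)
    (q : Fin t → EuclideanSpace ℝ (Fin n) → ℝ) (x : EuclideanSpace ℝ (Fin n)) :
    Continuous (fun m : (Fin s → ℝ) × (Fin t → ℝ) => Tmap p q x m) := by
  unfold Tmap
  exact Continuous.add
    (continuous_finset_sum _ fun i _ =>
      (((continuous_apply i).comp continuous_fst).smul continuous_const))
    (continuous_finset_sum _ fun j _ =>
      (((continuous_apply j).comp continuous_snd).smul continuous_const))

private lemma Tmap_smul (p : Fin s → EuclideanSpace ℝ (Fin n) → ℝ)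
    (q : Fin t → EuclideanSpace ℝ (Fin n) → ℝ) (x : EuclideanSpace ℝ (Fin n))
    (r : ℝ) (m : (Fin s → ℝ) × (Fin t → ℝ)) :
    Tmap p q x (r • m) = r • Tmap p q x m := by
  unfold Tmap
  rw [smul_add, Finset.smul_sum, Finset.smul_sum]
  congr 1
  · exact Finset.sum_congr rfl fun i _ => by
      simp [Prod.smul_fst, Pi.smul_apply, smul_smul]
  · exact Finset.sum_congr rfl fun j _ => by
      simp [Prod.smul_snd, Pi.smul_apply, smul_smul]

private lemma Tmap_diff_le (p : Fin s → EuclideanSpace ℝ (Fin n) → ℝ)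
    (q : Fin t → EuclideanSpace ℝ (Fin n) → ℝ) (x y : EuclideanSpace ℝ (Fin n))
    (m : (Fin s → ℝ) × (Fin t → ℝ)) :
    ‖Tmap p q x m - Tmap p q y m‖ ≤
      ((∑ i, ‖gradient (p i) x - gradient (p i) y‖)
        + ∑ j, ‖gradient (q j) x - gradient (q j) y‖) * ‖m‖ := by
  have h1 : Tmap p q x m - Tmap p q y m =
      (∑ i, m.1 i • (gradient (p i) x - gradient (p i) y))
        + ∑ j, m.2 j • (gradient (q j) x - gradient (q j) y) := by
    unfold Tmap
    simp only [smul_sub, Finset.sum_sub_distrib]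
    abel
  rw [h1, add_mul]
  refine (norm_add_le _ _).trans (add_le_add ?_ ?_)
  · refine (norm_sum_le _ _).trans ?_
    rw [Finset.sum_mul]
    refine Finset.sum_le_sum fun i _ => ?_
    rw [norm_smul, mul_comm]
    exact mul_le_mul_of_nonneg_left
      ((norm_le_pi_norm m.1 i).trans (norm_fst_le m)) (norm_nonneg _)
  · refine (norm_sum_le _ _).trans ?_
    rw [Finset.sum_mul]
    refine Finset.sum_le_sum fun j _ => ?_
    rw [norm_smul, mul_comm]
    exact mul_le_mul_of_nonneg_left
      ((norm_le_pi_norm m.2 j).trans (norm_snd_le m)) (norm_nonneg _)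

private lemma grad_cont {g : EuclideanSpace ℝ (Fin n) → ℝ} (hg : ContDiff ℝ 1 g) :
    Continuous (fun x => gradient g x) := by
  unfold gradient
  exact (LinearIsometryEquiv.continuous _).comp (hg.continuous_fderiv one_ne_zero)

private lemma isClosed_coneC (q : Fin t → EuclideanSpace ℝ (Fin n) → ℝ)
    (xbar : EuclideanSpace ℝ (Fin n)) :
    IsClosed {m : (Fin s → ℝ) × (Fin t → ℝ) |
      (∀ j, 0 ≤ m.2 j) ∧ ∀ j, q j xbar < 0 → m.2 j = 0} := by
  have h1 : IsClosed {m : (Fin s → ℝ) × (Fin t → ℝ) | ∀ j, 0 ≤ m.2 j} := by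
    have : {m : (Fin s → ℝ) × (Fin t → ℝ) | ∀ j, 0 ≤ m.2 j}
        = ⋂ j, {m : (Fin s → ℝ) × (Fin t → ℝ) | 0 ≤ m.2 j} := by ext m; simp
    rw [this]
    exact isClosed_iInter fun j =>
      isClosed_le continuous_const ((continuous_apply j).comp continuous_snd)
  have h2 : IsClosed {m : (Fin s → ℝ) × (Fin t → ℝ) | ∀ j, q j xbar < 0 → m.2 j = 0} := by
    have : {m : (Fin s → ℝ) × (Fin t → ℝ) | ∀ j, q j xbar < 0 → m.2 j = 0}
        = ⋂ j, {m : (Fin s → ℝ) × (Fin t → ℝ) | q j xbar < 0 → m.2 j = 0} := by ext m; simp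
    rw [this]
    refine isClosed_iInter fun j => ?_
    by_cases hj : q j xbar < 0
    · simp only [hj, true_implies]
      exact isClosed_eq ((continuous_apply j).comp continuous_snd) continuous_const
    · have : {m : (Fin s → ℝ) × (Fin t → ℝ) | q j xbar < 0 → m.2 j = 0} = Set.univ := by
        ext m; simp [hj]
      rw [this]; exact isClosed_univ
  exact h1.inter h2

private lemma coneC_smul (q : Fin t → EuclideanSpace ℝ (Fin n) → ℝ)
    (xbar : EuclideanSpace ℝ (Fin n)) {r : ℝ} (hr : 0 ≤ r)
    {m : (Fin s → ℝ) × (Fin t → ℝ)}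
    (hm : (∀ j, 0 ≤ m.2 j) ∧ ∀ j, q j xbar < 0 → m.2 j = 0) :
    (∀ j, 0 ≤ (r • m).2 j) ∧ ∀ j, q j xbar < 0 → (r • m).2 j = 0 := by
  constructor
  · intro j
    simp only [Prod.smul_snd, Pi.smul_apply, smul_eq_mul]
    exact mul_nonneg hr (hm.1 j)
  · intro j hj
    simp only [Prod.smul_snd, Pi.smul_apply, smul_eq_mul, hm.2 j hj, mul_zero]

private lemma exists_coercive (p : Fin s → EuclideanSpace ℝ (Fin n) → ℝ)
    (q : Fin t → EuclideanSpace ℝ (Fin n) → ℝ) (xbar : EuclideanSpace ℝ (Fin n))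
    (hMFCQ : ∀ m : (Fin s → ℝ) × (Fin t → ℝ),
      (∀ j, 0 ≤ m.2 j) → (∀ j, q j xbar < 0 → m.2 j = 0) →
      Tmap p q xbar m = 0 → m = 0) :
    ∃ c > 0, ∀ m : (Fin s → ℝ) × (Fin t → ℝ),
      (∀ j, 0 ≤ m.2 j) → (∀ j, q j xbar < 0 → m.2 j = 0) →
      c * ‖m‖ ≤ ‖Tmap p q xbar m‖ := by
  classical
  set C : Set ((Fin s → ℝ) × (Fin t → ℝ)) :=
    {m | (∀ j, 0 ≤ m.2 j) ∧ ∀ j, q j xbar < 0 → m.2 j = 0} with hC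
  have hCcl : IsClosed C := isClosed_coneC q xbar
  by_cases hK : (C ∩ Metric.sphere 0 1).Nonempty
  · obtain ⟨m0, hm0, hmin⟩ := ((isCompact_sphere (0 : (Fin s → ℝ) × (Fin t → ℝ)) 1).inter_left
      hCcl).exists_isMinOn hK ((Tmap_cont p q xbar).norm.continuousOn)
    have hm0n : ‖m0‖ = 1 := mem_sphere_zero_iff_norm.1 hm0.2
    refine ⟨‖Tmap p q xbar m0‖, ?_, ?_⟩
    · rcases (norm_nonneg (Tmap p q xbar m0)).lt_or_eq with h | h
      · exact h
      · exfalso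
        have h0 : Tmap p q xbar m0 = 0 := norm_eq_zero.1 h.symm
        have := hMFCQ m0 hm0.1.1 hm0.1.2 h0
        rw [this, norm_zero] at hm0n
        exact one_ne_zero hm0n.symm
    · intro m hm1 hm2
      rcases eq_or_ne m 0 with rfl | hm0'
      · rw [norm_zero, mul_zero]; exact norm_nonneg _
      · have hnorm : ‖m‖ ≠ 0 := norm_ne_zero_iff.2 hm0'
        have hmem : (‖m‖⁻¹ • m) ∈ C ∩ Metric.sphere 0 1 := by
          refine ⟨coneC_smul q xbar (inv_nonneg.2 (norm_nonneg _)) ⟨hm1, hm2⟩, ?_⟩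
          rw [mem_sphere_zero_iff_norm, norm_smul, Real.norm_eq_abs,
            abs_of_nonneg (inv_nonneg.2 (norm_nonneg _)), inv_mul_cancel₀ hnorm]
        have hle := hmin hmem
        simp only [Set.mem_setOf_eq, Tmap_smul, norm_smul, Real.norm_eq_abs,
          abs_of_nonneg (inv_nonneg.2 (norm_nonneg m))] at hle
        calc ‖Tmap p q xbar m0‖ * ‖m‖ ≤ (‖m‖⁻¹ * ‖Tmap p q xbar m‖) * ‖m‖ :=
              mul_le_mul_of_nonneg_right hle (norm_nonneg _)
          _ = ‖Tmap p q xbar m‖ := by field_simp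
  · refine ⟨1, one_pos, fun m hm1 hm2 => ?_⟩
    rcases eq_or_ne m 0 with rfl | hm0'
    · rw [norm_zero, mul_zero]; exact norm_nonneg _
    · exfalso
      have hnorm : ‖m‖ ≠ 0 := norm_ne_zero_iff.2 hm0'
      exact hK ⟨‖m‖⁻¹ • m, coneC_smul q xbar (inv_nonneg.2 (norm_nonneg _)) ⟨hm1, hm2⟩, by
        rw [mem_sphere_zero_iff_norm, norm_smul, Real.norm_eq_abs,
          abs_of_nonneg (inv_nonneg.2 (norm_nonneg _)), inv_mul_cancel₀ hnorm]⟩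

end auxT

set_option maxHeartbeats 1000000 in
theorem nlp_identification {n s t : ℕ}
    (f : EuclideanSpace ℝ (Fin n) → ℝ)
    (p : Fin s → EuclideanSpace ℝ (Fin n) → ℝ)
    (q : Fin t → EuclideanSpace ℝ (Fin n) → ℝ)
    (hf : ContDiff ℝ 1 f) (hp : ∀ i, ContDiff ℝ 1 (p i)) (hq : ∀ j, ContDiff ℝ 1 (q j))
    (xbar : EuclideanSpace ℝ (Fin n))
    (hfeas : (∀ i, p i xbar = 0) ∧ (∀ j, q j xbar ≤ 0))
    (hmult : ∃ (lam : Fin s → ℝ) (mu : Fin t → ℝ),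
      (∀ j, 0 ≤ mu j) ∧ (∀ j, q j xbar < 0 → mu j = 0) ∧
      gradient f xbar + (∑ i, lam i • gradient (p i) xbar)
        + (∑ j, mu j • gradient (q j) xbar) = 0)
    (hMFCQ : ∀ (lam : Fin s → ℝ) (mu : Fin t → ℝ),
      (∀ j, 0 ≤ mu j) → (∀ j, q j xbar < 0 → mu j = 0) →
      (∑ i, lam i • gradient (p i) xbar) + (∑ j, mu j • gradient (q j) xbar) = 0 →
      lam = 0 ∧ mu = 0) :
    ∃ ε₀' > (0 : ℝ), ∀ ε' ∈ Set.Ioo (0 : ℝ) ε₀', ∃ δ' > (0 : ℝ),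
      ∀ (x : EuclideanSpace ℝ (Fin n)) (lam : Fin s → ℝ) (mu : Fin t → ℝ),
        (∀ j, 0 ≤ mu j) →
        ‖x - xbar‖ < δ' →
        (∀ j, q j x < -δ' → mu j = 0) →
        ‖gradient f x + (∑ i, lam i • gradient (p i) x)
          + (∑ j, mu j • gradient (q j) x)‖ < δ' →
        ∀ J : Set (Fin t),
          (∀ j ∈ J, q j x > -ε') →
          (∀ j, j ∉ J → mu j < ε') →
          SufficientIndexSet f p q xbar J := by
  classical
  obtain ⟨c, hc0, hcoer⟩ := exists_coercive p q xbar (by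
    intro m h1 h2 h0
    obtain ⟨ha, hb⟩ := hMFCQ m.1 m.2 h1 h2 h0
    exact Prod.ext ha hb)
  set C : Set ((Fin s → ℝ) × (Fin t → ℝ)) :=
    {m | (∀ j, 0 ≤ m.2 j) ∧ ∀ j, q j xbar < 0 → m.2 j = 0} with hCdef
  set M : Set ((Fin s → ℝ) × (Fin t → ℝ)) :=
    {m | m ∈ C ∧ gradient f xbar + Tmap p q xbar m = 0} with hMdef
  have hMcl : IsClosed M :=
    (isClosed_coneC q xbar).inter
      (isClosed_eq (continuous_const.add (Tmap_cont p q xbar)) continuous_const)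
  have hMsub : M ⊆ Metric.closedBall 0 (‖gradient f xbar‖ / c) := by
    intro m hm
    rw [Metric.mem_closedBall, dist_zero_right]
    have h1 := hcoer m hm.1.1 hm.1.2
    have h2 : ‖Tmap p q xbar m‖ = ‖gradient f xbar‖ := by
      have h3 : Tmap p q xbar m = -gradient f xbar :=
        eq_neg_of_add_eq_zero_right hm.2
      rw [h3, norm_neg]
    rw [h2] at h1
    rw [le_div_iff₀ hc0]
    calc ‖m‖ * c = c * ‖m‖ := mul_comm _ _
      _ ≤ ‖gradient f xbar‖ := h1
  have hMcp : IsCompact M :=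
    (isCompact_closedBall _ _).of_isClosed_subset hMcl hMsub
  have hMne : M.Nonempty := by
    obtain ⟨lam, mu, h1, h2, h3⟩ := hmult
    refine ⟨(lam, mu), ⟨h1, h2⟩, ?_⟩
    show gradient f xbar + Tmap p q xbar (lam, mu) = 0
    rw [show Tmap p q xbar (lam, mu) = (∑ i, lam i • gradient (p i) xbar)
      + (∑ j, mu j • gradient (q j) xbar) from rfl, ← add_assoc]
    exact h3
  -- upper semicontinuity of multipliers
  have hE : ∀ θ : ℝ, 0 < θ → ∃ ρ > (0:ℝ), ∀ m ∈ C,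
      ‖gradient f xbar + Tmap p q xbar m‖ ≤ ρ → ∃ mb ∈ M, dist m mb < θ := by
    intro θ hθ
    by_contra hcon
    push_neg at hcon
    set A : ℕ → Set ((Fin s → ℝ) × (Fin t → ℝ)) := fun k =>
      {m | m ∈ C ∧ (‖gradient f xbar + Tmap p q xbar m‖ ≤ 1/((k:ℝ)+1)
        ∧ ∀ mb ∈ M, θ ≤ dist m mb)} with hA
    have hAcl : ∀ k, IsClosed (A k) := by
      intro k
      refine (isClosed_coneC q xbar).inter (IsClosed.inter ?_ ?_)
      · exact isClosed_le (continuous_const.add (Tmap_cont p q xbar)).norm continuous_const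
      · have h : IsClosed (⋂ mb ∈ M, {m : (Fin s → ℝ) × (Fin t → ℝ) | θ ≤ dist m mb}) :=
          isClosed_biInter fun mb _ =>
            isClosed_le continuous_const (continuous_id.dist continuous_const)
        convert h using 1
        refine iff_of_eq (congrArg IsClosed ?_)
        ext m1
        simp only [Set.mem_iInter, Set.mem_setOf_eq]
        exact Iff.rfl
    have hAsub : ∀ k, A k ⊆ Metric.closedBall 0 ((1 + ‖gradient f xbar‖)/c) := by
      intro k m hm
      rw [Metric.mem_closedBall, dist_zero_right]
      have h1 := hcoer m hm.1.1 hm.1.2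
      have h2 : ‖Tmap p q xbar m‖ ≤ 1/((k:ℝ)+1) + ‖gradient f xbar‖ := by
        calc ‖Tmap p q xbar m‖
            = ‖(gradient f xbar + Tmap p q xbar m) - gradient f xbar‖ := by
              rw [add_sub_cancel_left]
          _ ≤ ‖gradient f xbar + Tmap p q xbar m‖ + ‖gradient f xbar‖ := norm_sub_le _ _
          _ ≤ 1/((k:ℝ)+1) + ‖gradient f xbar‖ := by
              have := hm.2.1; linarith
      have h3 : (1:ℝ)/((k:ℝ)+1) ≤ 1 := by
        rw [div_le_one (by positivity)]
        linarith [Nat.cast_nonneg (α := ℝ) k]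
      rw [le_div_iff₀ hc0]
      calc ‖m‖ * c = c * ‖m‖ := mul_comm _ _
        _ ≤ ‖Tmap p q xbar m‖ := h1
        _ ≤ 1 + ‖gradient f xbar‖ := by linarith
    have hAne : ∀ k, (A k).Nonempty := by
      intro k
      obtain ⟨m, hmC, hres2, hdist⟩ := hcon (1/((k:ℝ)+1)) (by positivity)
      exact ⟨m, hmC, hres2, hdist⟩
    have hAdec : ∀ k, A (k+1) ⊆ A k := by
      intro k m hm
      refine ⟨hm.1, hm.2.1.trans ?_, hm.2.2⟩
      rw [show (((k+1 : ℕ)):ℝ) + 1 = ((k:ℝ)+1)+1 by push_cast; ring]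
      exact one_div_le_one_div_of_le (by positivity) (by linarith)
    obtain ⟨minf, hminf⟩ :=
      IsCompact.nonempty_iInter_of_sequence_nonempty_isCompact_isClosed A hAdec hAne
        ((isCompact_closedBall _ _).of_isClosed_subset (hAcl 0) (hAsub 0)) hAcl
    simp only [Set.mem_iInter] at hminf
    have h0 := hminf 0
    have hres0 : gradient f xbar + Tmap p q xbar minf = 0 := by
      by_contra hne
      have hpos : 0 < ‖gradient f xbar + Tmap p q xbar minf‖ := norm_pos_iff.2 hne
      obtain ⟨k, hk⟩ := exists_nat_one_div_lt hpos
      exact absurd ((hminf k).2.1) (not_le.2 hk)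
    have hcontra : θ ≤ dist minf minf := h0.2.2 minf ⟨h0.1, hres0⟩
    rw [dist_self] at hcontra; linarith
  -- positive gap for non-sufficient index sets
  have badS : ∀ S : Finset (Fin t), ∃ e : ℝ, 0 < e ∧
      ((¬ ∃ m ∈ M, ∀ j, j ∉ S → m.2 j = 0) → ∀ m ∈ M, ∃ j, j ∉ S ∧ e ≤ m.2 j) := by
    intro S
    by_cases hbad : ∃ m ∈ M, ∀ j, j ∉ S → m.2 j = 0
    · exact ⟨1, one_pos, fun h => absurd hbad h⟩
    · have hgc : ContinuousOn (fun m : (Fin s → ℝ) × (Fin t → ℝ) => ∑ j ∈ Sᶜ, m.2 j) M :=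
        (continuous_finset_sum _ fun j _ => (continuous_apply j).comp continuous_snd).continuousOn
      obtain ⟨m0, hm0M, hm0min⟩ := hMcp.exists_isMinOn hMne hgc
      have hv0 : 0 < ∑ j ∈ Sᶜ, m0.2 j := by
        rcases (Finset.sum_nonneg fun j _ => hm0M.1.1 j).lt_or_eq with h | h
        · exact h
        · exfalso
          refine hbad ⟨m0, hm0M, fun j hj => ?_⟩
          exact (Finset.sum_eq_zero_iff_of_nonneg (fun j _ => hm0M.1.1 j)).1 h.symm
            j (Finset.mem_compl.2 hj)
      set v := ∑ j ∈ Sᶜ, m0.2 j with hv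
      refine ⟨v/((t:ℝ)+1), div_pos hv0 (by positivity), fun _ m hmM => ?_⟩
      by_contra hno
      push_neg at hno
      have hle : ∑ j ∈ Sᶜ, m.2 j ≤ (Sᶜ.card : ℝ) * (v/((t:ℝ)+1)) := by
        have := Finset.sum_le_card_nsmul Sᶜ (fun j => m.2 j) (v/((t:ℝ)+1))
          (fun j hj => le_of_lt (hno j (Finset.mem_compl.1 hj)))
        simpa [nsmul_eq_mul] using this
      have hcard : (Sᶜ.card : ℝ) ≤ (t:ℝ) := by
        have h1 : Sᶜ.card ≤ Fintype.card (Fin t) := Finset.card_le_univ Sᶜ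
        rw [Fintype.card_fin] at h1
        exact_mod_cast h1
      have h1 : (0:ℝ) < v / ((t:ℝ)+1) := by positivity
      have hlt : ((Sᶜ.card : ℝ)) * (v/((t:ℝ)+1)) < v := by
        calc ((Sᶜ.card : ℝ)) * (v/((t:ℝ)+1)) ≤ (t:ℝ) * (v/((t:ℝ)+1)) :=
              mul_le_mul_of_nonneg_right hcard (le_of_lt h1)
          _ = v * (t:ℝ) / ((t:ℝ)+1) := by ring
          _ < v := by
              rw [div_lt_iff₀ (by positivity)]
              nlinarith [hv0]
      have hminle : (∑ j ∈ Sᶜ, m0.2 j) ≤ ∑ j ∈ Sᶜ, m.2 j := hm0min hmM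
      rw [← hv] at hminle
      linarith
  choose eS heS using badS
  -- the threshold ε₀'
  set F1 : Finset ℝ :=
    Finset.univ.image (fun j : Fin t => if q j xbar < 0 then -q j xbar else 1) with hF1
  set F2 : Finset ℝ := Finset.univ.image eS with hF2
  set Fs : Finset ℝ := insert 1 (F1 ∪ F2) with hFs
  have hFne : Fs.Nonempty := ⟨1, Finset.mem_insert_self _ _⟩
  set ε₀ := Fs.min' hFne with hε₀
  have hε₀pos : 0 < ε₀ := by
    rw [hε₀, Finset.lt_min'_iff]
    intro b hb
    rw [hFs, Finset.mem_insert, Finset.mem_union] at hb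
    rcases hb with rfl | hb | hb
    · exact one_pos
    · rw [hF1, Finset.mem_image] at hb
      obtain ⟨j, _, rfl⟩ := hb
      by_cases hj : q j xbar < 0
      · rw [if_pos hj]; linarith
      · rw [if_neg hj]; exact one_pos
    · rw [hF2, Finset.mem_image] at hb
      obtain ⟨S, _, rfl⟩ := hb
      exact (heS S).1
  have hε₀inact : ∀ j, q j xbar < 0 → ε₀ ≤ -q j xbar := by
    intro j hj
    refine Finset.min'_le _ _ ?_
    rw [hFs, Finset.mem_insert, Finset.mem_union]
    right; left
    rw [hF1, Finset.mem_image]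
    exact ⟨j, Finset.mem_univ _, by rw [if_pos hj]⟩
  have hε₀eS : ∀ S, ε₀ ≤ eS S := by
    intro S
    refine Finset.min'_le _ _ ?_
    rw [hFs, Finset.mem_insert, Finset.mem_union]
    right; right
    rw [hF2, Finset.mem_image]
    exact ⟨S, Finset.mem_univ _, rfl⟩
  refine ⟨ε₀, hε₀pos, ?_⟩
  rintro ε' ⟨hε'0, hε'lt⟩
  set θ := ε₀ - ε' with hθdef
  have hθ : 0 < θ := sub_pos.2 hε'lt
  obtain ⟨ρ, hρ0, hEρ⟩ := hE θ hθ
  set R := 2*(‖gradient f xbar‖ + 2)/c with hRdef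
  have hR0 : 0 < R := by rw [hRdef]; exact div_pos (by positivity) hc0
  have hst : (0:ℝ) < (s:ℝ)+(t:ℝ)+1 := by positivity
  obtain ⟨κ, hκ0, hκ1, hκ2⟩ : ∃ κ : ℝ, 0 < κ ∧ ((s:ℝ)+(t:ℝ)+1)*κ ≤ c/2
      ∧ (((s:ℝ)+(t:ℝ)+1)*κ)*R ≤ ρ/3 := by
    refine ⟨min (c/(2*((s:ℝ)+(t:ℝ)+1))) (ρ/(3*((s:ℝ)+(t:ℝ)+1)*R)),
      lt_min (div_pos hc0 (by positivity)) (div_pos hρ0 (mul_pos (by positivity) hR0)), ?_, ?_⟩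
    · calc ((s:ℝ)+(t:ℝ)+1)*min (c/(2*((s:ℝ)+(t:ℝ)+1))) (ρ/(3*((s:ℝ)+(t:ℝ)+1)*R))
          ≤ ((s:ℝ)+(t:ℝ)+1)*(c/(2*((s:ℝ)+(t:ℝ)+1))) := by
            exact mul_le_mul_of_nonneg_left (min_le_left _ _) (le_of_lt hst)
        _ = c/2 := by field_simp
    · calc (((s:ℝ)+(t:ℝ)+1)*min (c/(2*((s:ℝ)+(t:ℝ)+1))) (ρ/(3*((s:ℝ)+(t:ℝ)+1)*R)))*R
          ≤ (((s:ℝ)+(t:ℝ)+1)*(ρ/(3*((s:ℝ)+(t:ℝ)+1)*R)))*R := by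
            refine mul_le_mul_of_nonneg_right ?_ (le_of_lt hR0)
            exact mul_le_mul_of_nonneg_left (min_le_right _ _) (le_of_lt hst)
        _ = ρ/3 := by field_simp
  set β := min (ε₀ - ε') (ε₀/2) with hβdef
  have hβ0 : 0 < β := lt_min hθ (half_pos hε₀pos)
  have hevq : ∀ᶠ x in nhds xbar, ∀ j, |q j x - q j xbar| < β := by
    rw [Filter.eventually_all]
    intro j
    have := Metric.tendsto_nhds.1 ((hq j).continuous.tendsto xbar) β hβ0
    simpa [Real.dist_eq] using this
  have hevf : ∀ᶠ x in nhds xbar, ‖gradient f x - gradient f xbar‖ < min (ρ/3) 1 := by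
    have := Metric.tendsto_nhds.1 ((grad_cont hf).tendsto xbar) (min (ρ/3) 1)
      (lt_min (div_pos hρ0 (by norm_num)) one_pos)
    simpa [dist_eq_norm] using this
  have hevp : ∀ᶠ x in nhds xbar, ∀ i, ‖gradient (p i) x - gradient (p i) xbar‖ < κ := by
    rw [Filter.eventually_all]
    intro i
    have := Metric.tendsto_nhds.1 ((grad_cont (hp i)).tendsto xbar) κ hκ0
    simpa [dist_eq_norm] using this
  have hevq2 : ∀ᶠ x in nhds xbar, ∀ j, ‖gradient (q j) x - gradient (q j) xbar‖ < κ := by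
    rw [Filter.eventually_all]
    intro j
    have := Metric.tendsto_nhds.1 ((grad_cont (hq j)).tendsto xbar) κ hκ0
    simpa [dist_eq_norm] using this
  obtain ⟨δ₀, hδ₀0, hδ₀⟩ := Metric.eventually_nhds_iff.1 (hevq.and (hevf.and (hevp.and hevq2)))
  set δ := min δ₀ (min 1 (min (ρ/3) (ε₀/2))) with hδdef
  have hδ0 : 0 < δ := by
    rw [hδdef]
    exact lt_min hδ₀0 (lt_min one_pos (lt_min (div_pos hρ0 (by norm_num)) (half_pos hε₀pos)))
  refine ⟨δ, hδ0, ?_⟩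
  intro x lam mu hmu0 hxnear hmusupp hres J hJq hJmu
  set m : (Fin s → ℝ) × (Fin t → ℝ) := (lam, mu) with hmdef
  have hclose := hδ₀ (show dist x xbar < δ₀ by
    rw [dist_eq_norm]; exact hxnear.trans_le (min_le_left _ _))
  obtain ⟨hcq, hcf, hcp, hcq2⟩ := hclose
  have hδ1 : δ ≤ 1 := (min_le_right _ _).trans (min_le_left _ _)
  have hδρ : δ ≤ ρ/3 := (min_le_right _ _).trans ((min_le_right _ _).trans (min_le_left _ _))
  have hδε : δ ≤ ε₀/2 := (min_le_right _ _).trans ((min_le_right _ _).trans (min_le_right _ _))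
  have hβ1 : β ≤ ε₀ - ε' := min_le_left _ _
  have hβ2 : β ≤ ε₀/2 := min_le_right _ _
  -- Part 1 : all indices in J are active at xbar
  have hpart1 : ∀ j ∈ J, q j xbar = 0 := by
    intro j hj
    by_contra hne
    have hlt : q j xbar < 0 := lt_of_le_of_ne (hfeas.2 j) hne
    have h1 : ε₀ ≤ -q j xbar := hε₀inact j hlt
    have h2 : q j x - q j xbar ≤ |q j x - q j xbar| := le_abs_self _
    have h3 := hcq j
    have h4 := hJq j hj
    linarith
  -- m lies in the cone C
  have hmC1 : ∀ j, 0 ≤ m.2 j := hmu0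
  have hmC2 : ∀ j, q j xbar < 0 → m.2 j = 0 := by
    intro j hj
    apply hmusupp
    have h1 : ε₀ ≤ -q j xbar := hε₀inact j hj
    have h2 : q j x - q j xbar ≤ |q j x - q j xbar| := le_abs_self _
    have h3 := hcq j
    linarith
  have hres' : ‖gradient f x + Tmap p q x m‖ < δ := by
    have heq : gradient f x + Tmap p q x m
        = gradient f x + (∑ i, lam i • gradient (p i) x)
          + (∑ j, mu j • gradient (q j) x) := by
      rw [show Tmap p q x m = (∑ i, lam i • gradient (p i) x)
        + (∑ j, mu j • gradient (q j) x) from rfl, ← add_assoc]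
    rw [heq]
    exact hres
  have hgf : ‖gradient f x‖ ≤ ‖gradient f xbar‖ + 1 := by
    have h2 : ‖gradient f x - gradient f xbar‖ < 1 := lt_of_lt_of_le hcf (min_le_right _ _)
    calc ‖gradient f x‖ = ‖(gradient f x - gradient f xbar) + gradient f xbar‖ := by
          rw [sub_add_cancel]
      _ ≤ ‖gradient f x - gradient f xbar‖ + ‖gradient f xbar‖ := norm_add_le _ _
      _ ≤ ‖gradient f xbar‖ + 1 := by linarith
  set η := (∑ i, ‖gradient (p i) x - gradient (p i) xbar‖)
    + ∑ j, ‖gradient (q j) x - gradient (q j) xbar‖ with hηdef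
  have hηle : η ≤ ((s:ℝ)+(t:ℝ))*κ := by
    have h1 : (∑ i, ‖gradient (p i) x - gradient (p i) xbar‖) ≤ (s:ℝ)*κ := by
      calc (∑ i, ‖gradient (p i) x - gradient (p i) xbar‖) ≤ ∑ _i : Fin s, κ :=
            Finset.sum_le_sum fun i _ => le_of_lt (hcp i)
        _ = (s:ℝ)*κ := by
            rw [Finset.sum_const, Finset.card_univ, Fintype.card_fin, nsmul_eq_mul]
    have h2 : (∑ j, ‖gradient (q j) x - gradient (q j) xbar‖) ≤ (t:ℝ)*κ := by
      calc (∑ j, ‖gradient (q j) x - gradient (q j) xbar‖) ≤ ∑ _j : Fin t, κ :=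
            Finset.sum_le_sum fun j _ => le_of_lt (hcq2 j)
        _ = (t:ℝ)*κ := by
            rw [Finset.sum_const, Finset.card_univ, Fintype.card_fin, nsmul_eq_mul]
    rw [hηdef]; nlinarith
  have hηle' : η ≤ ((s:ℝ)+(t:ℝ)+1)*κ := by nlinarith
  have hηc : η ≤ c/2 := hηle'.trans hκ1
  have hTd := Tmap_diff_le p q x xbar m
  rw [← hηdef] at hTd
  have hTxm : ‖Tmap p q x m‖ ≤ ‖gradient f xbar‖ + 2 := by
    calc ‖Tmap p q x m‖ = ‖(gradient f x + Tmap p q x m) - gradient f x‖ := by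
          rw [add_sub_cancel_left]
      _ ≤ ‖gradient f x + Tmap p q x m‖ + ‖gradient f x‖ := norm_sub_le _ _
      _ ≤ ‖gradient f xbar‖ + 2 := by linarith
  have hmR : ‖m‖ ≤ R := by
    have h1 := hcoer m hmC1 hmC2
    have h3 : ‖Tmap p q xbar m‖ - ‖Tmap p q x m‖ ≤ ‖Tmap p q xbar m - Tmap p q x m‖ :=
      norm_sub_norm_le _ _
    have h4 : ‖Tmap p q xbar m - Tmap p q x m‖ = ‖Tmap p q x m - Tmap p q xbar m‖ :=
      norm_sub_rev _ _
    have h5 : η*‖m‖ ≤ (c/2)*‖m‖ := mul_le_mul_of_nonneg_right hηc (norm_nonneg _)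
    rw [hRdef, le_div_iff₀ hc0]
    nlinarith [norm_nonneg m]
  have hresbar : ‖gradient f xbar + Tmap p q xbar m‖ ≤ ρ := by
    have h1 : gradient f xbar + Tmap p q xbar m
        = (gradient f x + Tmap p q x m) + (gradient f xbar - gradient f x)
          + (Tmap p q xbar m - Tmap p q x m) := by abel
    rw [h1]
    have hb : ‖gradient f xbar - gradient f x‖ ≤ ρ/3 := by
      rw [norm_sub_rev]
      exact (lt_of_lt_of_le hcf (min_le_left _ _)).le
    have hcc : ‖Tmap p q xbar m - Tmap p q x m‖ ≤ ρ/3 := by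
      rw [norm_sub_rev]
      refine hTd.trans ?_
      calc η*‖m‖ ≤ (((s:ℝ)+(t:ℝ)+1)*κ)*R := by
            exact mul_le_mul hηle' hmR (norm_nonneg _)
              (mul_nonneg (le_of_lt hst) (le_of_lt hκ0))
        _ ≤ ρ/3 := hκ2
    calc ‖(gradient f x + Tmap p q x m) + (gradient f xbar - gradient f x)
          + (Tmap p q xbar m - Tmap p q x m)‖
        ≤ ‖gradient f x + Tmap p q x m‖ + ‖gradient f xbar - gradient f x‖
          + ‖Tmap p q xbar m - Tmap p q x m‖ := norm_add₃_le
      _ ≤ ρ := by linarith [hres'.le]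
  obtain ⟨mb, hmbM, hmbd⟩ := hEρ m ⟨hmC1, hmC2⟩ hresbar
  refine ⟨hpart1, ?_⟩
  by_contra hno2
  set S : Finset (Fin t) := Finset.univ.filter (· ∈ J) with hSdef
  have hSJ : ∀ j, j ∉ S ↔ j ∉ J := by
    intro j; simp [hSdef]
  have hbadS : ¬ ∃ mm ∈ M, ∀ j, j ∉ S → mm.2 j = 0 := by
    rintro ⟨mm, hmmM, hmm0⟩
    refine hno2 ⟨mm.1, mm.2, hmmM.1.1, fun j hj => hmm0 j ((hSJ j).2 hj), ?_⟩
    have h2 := hmmM.2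
    rw [show Tmap p q xbar mm = (∑ i, mm.1 i • gradient (p i) xbar)
      + (∑ j, mm.2 j • gradient (q j) xbar) from rfl, ← add_assoc] at h2
    exact h2
  obtain ⟨j, hjS, hjge⟩ := (heS S).2 hbadS mb hmbM
  have hjJ : j ∉ J := (hSJ j).1 hjS
  have h1 : mu j < ε' := hJmu j hjJ
  have hmj : m.2 j = mu j := rfl
  have h3 : dist (m.2 j) (mb.2 j) ≤ dist m.2 mb.2 := dist_le_pi_dist m.2 mb.2 j
  have h4 : dist m.2 mb.2 ≤ dist m mb := by
    rw [Prod.dist_eq]; exact le_max_right _ _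
  rw [Real.dist_eq] at h3
  have h5 : mb.2 j - m.2 j ≤ |m.2 j - mb.2 j| := by
    rw [abs_sub_comm]; exact le_abs_self _
  have h6 : ε₀ ≤ eS S := hε₀eS S
  have h7 : mb.2 j < ε₀ := by
    have : mb.2 j ≤ mu j + dist m mb := by rw [← hmj]; linarith
    calc mb.2 j ≤ mu j + dist m mb := this
      _ < ε' + θ := by linarith
      _ = ε₀ := by rw [hθdef]; ring
  linarith
end
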